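/- Let S, σ, n > 0 with 2Sn ≥ σ, and define f(γ) = (1/2)[(1/(2n) − γ²σ/S) + √((1/(2n) − γ²σ/S)² + 4γ²)] for γ ∈ [0, √(S/(2nσ))]. Then 0 ≤ f'(γ) ≤ 1 − γσ/S < 1 on this interval; in particular f is a contraction mapping on [0, √(S/(2nσ))] restricted to [γ₋₁, √(S/(2nσ))] for any γ₋₁ > 0. -/

import Mathlib

set_option maxHeartbeats 1000000 in
/-- The ACDM coefficient update map
`F(γ) = (1/2)[(1/(2n) - γ²σ/S) + √((1/(2n) - γ²σ/S)² + 4γ²)]`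
satisfies `0 ≤ F'(γ) ≤ 1 - γσ/S` on `[0, √(S/(2nσ))]`, and `F'(γ) < 1` for `γ > 0`;
in particular `F` is a contraction on `[γ₋₁, √(S/(2nσ))]` for any `γ₋₁ > 0`. -/
theorem stmt_16 (n : ℕ) (hn : 0 < n) (S σ : ℝ) (hS : 0 < S) (hσ : 0 < σ)
    (h2Sn : σ ≤ 2 * S * n) (F : ℝ → ℝ)
    (hF : ∀ γ : ℝ, F γ =
      (1 / 2) * ((1 / (2 * n) - γ ^ 2 * σ / S)
        + Real.sqrt ((1 / (2 * n) - γ ^ 2 * σ / S) ^ 2 + 4 * γ ^ 2))) :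
    (∀ γ : ℝ, 0 ≤ γ → γ ≤ Real.sqrt (S / (2 * n * σ)) →
      0 ≤ deriv F γ ∧ deriv F γ ≤ 1 - γ * σ / S) ∧
    (∀ γ : ℝ, 0 < γ → γ ≤ Real.sqrt (S / (2 * n * σ)) → deriv F γ < 1) := by
  have hn' : (0:ℝ) < n := by exact_mod_cast hn
  set A : ℝ := 1 / (2*n) with hA
  set B : ℝ := σ / S with hB
  have hA0 : 0 < A := by rw [hA]; positivity
  have hB0 : 0 < B := by rw [hB]; positivity
  have hAB : A * B ≤ 1 := by
    rw [hA, hB, div_mul_div_comm, div_le_one (by positivity)]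
    nlinarith
  have hFeq : F = fun γ : ℝ => (1/2) * ((A - γ^2 * B) + Real.sqrt ((A - γ^2*B)^2 + 4*γ^2)) := by
    funext γ
    rw [hF, hA, hB]
    ring_nf
  have hD : ∀ γ : ℝ, 0 < (A - γ^2*B)^2 + 4*γ^2 := by
    intro γ
    rcases eq_or_ne γ 0 with h | h
    · simp [h]; positivity
    · have : 0 < 4*γ^2 := by positivity
      nlinarith [sq_nonneg (A - γ^2*B)]
  have hderiv : ∀ γ : ℝ, HasDerivAt F
      (-(γ*B) + γ*(2 - (A - γ^2*B)*B) / Real.sqrt ((A - γ^2*B)^2 + 4*γ^2)) γ := by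
    intro γ
    rw [hFeq]
    have h1 : HasDerivAt (fun γ : ℝ => A - γ^2*B) (-(2*γ*B)) γ := by
      have := ((hasDerivAt_pow 2 γ).mul_const B).const_sub A
      exact this.congr_deriv (by ring)
    have h2 : HasDerivAt (fun γ : ℝ => (A - γ^2*B)^2 + 4*γ^2)
        (2*(A - γ^2*B)*(-(2*γ*B)) + 8*γ) γ := by
      have ha : HasDerivAt (fun γ : ℝ => (A - γ^2*B)^2) (2*(A - γ^2*B)*(-(2*γ*B))) γ := by
        have := h1.pow 2
        exact this.congr_deriv (by ring)
      have hb : HasDerivAt (fun γ : ℝ => 4*γ^2) (8*γ) γ := by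
        have := (hasDerivAt_pow 2 γ).const_mul (4:ℝ)
        exact this.congr_deriv (by ring)
      exact ha.add hb
    have h3 := h2.sqrt (ne_of_gt (hD γ))
    have h4 := (h1.add h3).const_mul (1/2 : ℝ)
    have hs0 : 0 < Real.sqrt ((A - γ^2*B)^2 + 4*γ^2) := Real.sqrt_pos.mpr (hD γ)
    refine h4.congr_deriv ?_
    field_simp
    ring
  clear_value A B
  have hmain : ∀ γ : ℝ, 0 ≤ γ → γ ≤ Real.sqrt (S / (2 * n * σ)) →
      0 ≤ deriv F γ ∧ deriv F γ ≤ 1 - γ * σ / S := by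
    intro γ hγ0 hγle
    have hXeq : S / (2 * n * σ) = A / B := by
      rw [hA, hB]; field_simp
    rw [hXeq] at hγle
    have hAB0 : (0:ℝ) ≤ A / B := by positivity
    have hγ2 : γ^2 ≤ A / B := by
      nlinarith [Real.sq_sqrt hAB0, Real.sqrt_nonneg (A/B)]
    have hγ2B : γ^2 * B ≤ A := (le_div_iff₀ hB0).mp hγ2
    have hd := (hderiv γ).deriv
    set u : ℝ := A - γ^2*B with hudef
    have hDγ : 0 < u^2 + 4*γ^2 := by rw [hudef]; exact hD γ
    set s : ℝ := Real.sqrt (u^2 + 4*γ^2) with hsdef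
    clear_value u
    have hu : 0 ≤ u := by rw [hudef]; linarith
    have huB : u * B ≤ 1 := by nlinarith
    have hs0 : 0 < s := by rw [hsdef]; exact Real.sqrt_pos.mpr hDγ
    have hs2 : s^2 = u^2 + 4*γ^2 := by rw [hsdef]; exact Real.sq_sqrt hDγ.le
    clear_value s
    clear hF hFeq hD hderiv hγle hXeq
    have hid : u * B + B^2 * γ^2 = A * B := by rw [hudef]; ring
    have key1 : B * s ≤ 2 - u * B := by
      nlinarith [mul_pos hB0 hs0, sq_nonneg (B*s)]
    have key2 : γ * (2 - u * B) ≤ s := by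
      nlinarith [mul_nonneg hγ0 (by linarith : (0:ℝ) ≤ 2 - u*B),
        mul_nonneg hu (mul_nonneg (sq_nonneg γ) hB0.le),
        mul_nonneg (mul_nonneg hu hu) (sq_nonneg γ),
        mul_nonneg hu (sq_nonneg (γ*B))]
    have hσS : γ * σ / S = γ * B := by rw [hB]; ring
    constructor
    · rw [hd]
      have : γ * B ≤ γ * (2 - u*B) / s := by
        rw [le_div_iff₀ hs0]
        nlinarith [mul_le_mul_of_nonneg_left key1 hγ0]
      linarith
    · rw [hd, hσS]
      have : γ * (2 - u*B) / s ≤ 1 := by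
        rw [div_le_one hs0]; exact key2
      linarith
  refine ⟨hmain, fun γ hγ0 hγle => ?_⟩
  have h := (hmain γ hγ0.le hγle).2
  have : 0 < γ * σ / S := by positivity
  linarith
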